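/- Let d ≥ 2, λ = t² ∈ ℕ, κ(d,λ) = √(λ/d), and 𝔪_t(ξ) := |S_t ∩ ℤ^d|^{-1} ∑_{x ∈ S_t ∩ ℤ^d} e^{2πi ξ·x}. Then |𝔪_t(ξ) − (−1)^λ| ≤ 2π² κ(d,λ)² ‖ξ + (1/2,...,1/2)‖² for all ξ ∈ 𝕋^d, where ‖η‖² = ∑_j dist(η_j, ℤ)². -/

import Mathlib

open Finset Complex

lemma sphere_cross {d lam : ℕ} (S : Finset (Fin d → ℤ))
    (hS : ∀ x, x ∈ S ↔ ∑ j, (x j) ^ 2 = (lam : ℤ)) {j k : Fin d} (hjk : j ≠ k) :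
    ∑ x ∈ S, x j * x k = 0 := by
  classical
  have hmem : ∀ x ∈ S, Function.update x k (-(x k)) ∈ S := by
    intro x hx
    rw [hS] at hx ⊢
    rw [← hx]
    refine Finset.sum_congr rfl fun i _ => ?_
    by_cases hik : i = k
    · subst hik; simp [Function.update_self]
    · simp [Function.update_of_ne hik]
  have h := Finset.sum_nbij' (i := fun x => Function.update x k (-(x k)))
    (j := fun x => Function.update x k (-(x k)))
    (fun x hx => hmem x hx) (fun x hx => hmem x hx)
    (fun x hx => by
      funext i
      by_cases hik : i = k
      · subst hik; simp
      · simp [Function.update_of_ne hik])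
    (fun x hx => by
      funext i
      by_cases hik : i = k
      · subst hik; simp
      · simp [Function.update_of_ne hik])
    (f := fun x => x j * x k) (g := fun x => -(x j * x k))
    (fun x hx => by
      simp [Function.update_of_ne hjk, Function.update_self, mul_neg])
  rw [Finset.sum_neg_distrib] at h
  linarith

lemma sphere_diag {d lam : ℕ} (S : Finset (Fin d → ℤ))
    (hS : ∀ x, x ∈ S ↔ ∑ j, (x j) ^ 2 = (lam : ℤ)) (j k : Fin d) :
    ∑ x ∈ S, (x j) ^ 2 = ∑ x ∈ S, (x k) ^ 2 := by
  classical
  have hmem : ∀ x ∈ S, (x ∘ Equiv.swap j k) ∈ S := by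
    intro x hx
    rw [hS] at hx ⊢
    rw [← hx]
    exact Fintype.sum_equiv (Equiv.swap j k) _ _ (fun i => rfl)
  refine Finset.sum_nbij' (i := fun x => x ∘ Equiv.swap j k)
    (j := fun x => x ∘ Equiv.swap j k) (fun x hx => hmem x hx) (fun x hx => hmem x hx)
    (fun x hx => by funext i; simp) (fun x hx => by funext i; simp)
    (fun x hx => by simp [Function.comp, Equiv.swap_apply_left])

lemma sphere_diag_val {d lam : ℕ} (S : Finset (Fin d → ℤ))
    (hS : ∀ x, x ∈ S ↔ ∑ j, (x j) ^ 2 = (lam : ℤ)) (j : Fin d) :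
    (d : ℤ) * ∑ x ∈ S, (x j) ^ 2 = S.card * lam := by
  classical
  have h1 : ∑ k : Fin d, ∑ x ∈ S, (x k) ^ 2 = S.card * lam := by
    rw [Finset.sum_comm]
    rw [Finset.sum_congr rfl (fun x hx => (hS x).1 hx)]
    simp [mul_comm]
  have h2 : ∑ k : Fin d, ∑ x ∈ S, (x k) ^ 2 = d * ∑ x ∈ S, (x j) ^ 2 := by
    rw [Finset.sum_congr rfl (fun k _ => sphere_diag S hS k j)]
    simp [mul_comm]
  linarith

lemma sphere_quad {d lam : ℕ} (S : Finset (Fin d → ℤ))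
    (hS : ∀ x, x ∈ S ↔ ∑ j, (x j) ^ 2 = (lam : ℤ)) (θ : Fin d → ℝ) :
    (d : ℝ) * ∑ x ∈ S, (∑ j, θ j * (x j : ℝ)) ^ 2
      = (S.card : ℝ) * (lam : ℝ) * ∑ j, (θ j) ^ 2 := by
  classical
  have e1 : ∀ x : Fin d → ℤ, (∑ j, θ j * (x j : ℝ)) ^ 2
      = ∑ j, ∑ k, (θ j * θ k) * ((x j * x k : ℤ) : ℝ) := by
    intro x
    rw [sq, Finset.sum_mul_sum]
    exact Finset.sum_congr rfl fun j _ => Finset.sum_congr rfl fun k _ => by push_cast; ring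
  have e2 : ∑ x ∈ S, (∑ j, θ j * (x j : ℝ)) ^ 2
      = ∑ j, ∑ k, (θ j * θ k) * ((∑ x ∈ S, x j * x k : ℤ) : ℝ) := by
    rw [Finset.sum_congr rfl fun x _ => e1 x, Finset.sum_comm]
    refine Finset.sum_congr rfl fun j _ => ?_
    rw [Finset.sum_comm]
    refine Finset.sum_congr rfl fun k _ => ?_
    rw [← Finset.mul_sum]
    push_cast
    ring
  have e3 : ∀ j, ∑ k, (θ j * θ k) * ((∑ x ∈ S, x j * x k : ℤ) : ℝ)
      = θ j ^ 2 * ((∑ x ∈ S, (x j) ^ 2 : ℤ) : ℝ) := by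
    intro j
    rw [Finset.sum_eq_single_of_mem j (Finset.mem_univ j)
      (fun k _ hkj => by rw [sphere_cross S hS (Ne.symm hkj)]; simp)]
    congr 1
    · ring
    · congr 1
      exact Finset.sum_congr rfl fun x _ => by ring
  have e4 : ∑ j, ∑ k, (θ j * θ k) * ((∑ x ∈ S, x j * x k : ℤ) : ℝ)
      = ∑ j, θ j ^ 2 * ((∑ x ∈ S, (x j) ^ 2 : ℤ) : ℝ) :=
    by refine Finset.sum_congr rfl fun j _ => ?_; exact e3 j
  rw [e2, e4, Finset.mul_sum, Finset.mul_sum]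
  refine Finset.sum_congr rfl fun j _ => ?_
  have := sphere_diag_val S hS j
  have hcast : (d : ℝ) * ((∑ x ∈ S, (x j) ^ 2 : ℤ) : ℝ) = (S.card : ℝ) * (lam : ℝ) := by
    exact_mod_cast congrArg (Int.cast : ℤ → ℝ) this
  nlinarith [hcast]

lemma neg_one_pow_int_eq (m : ℤ) (lam : ℕ) (h : Even (m + lam)) :
    ((-1 : ℂ) ^ m) = (-1 : ℂ) ^ lam := by
  obtain ⟨r, hr⟩ := h
  have : m = 2 * r - lam := by omega
  rw [this, zpow_sub₀ (by norm_num), zpow_natCast]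
  rw [show (2 * r : ℤ) = r + r from by ring, zpow_add₀ (by norm_num)]
  have h1 : ((-1 : ℂ) ^ (r:ℤ)) * ((-1:ℂ) ^ (r:ℤ)) = 1 := by
    rw [← zpow_add₀ (by norm_num : (-1:ℂ) ≠ 0)]
    exact Even.neg_one_zpow ⟨r, rfl⟩
  rw [h1]
  rcases Nat.even_or_odd lam with he | ho
  · rw [he.neg_one_pow]; norm_num
  · rw [ho.neg_one_pow]; norm_num

lemma exp_half_int (m : ℤ) (lam : ℕ) (h : Even (m + lam)) :
    Complex.exp (2 * Real.pi * Complex.I * (-(1/2) * m)) = (-1 : ℂ) ^ lam := by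
  have : (2 : ℂ) * Real.pi * Complex.I * (-(1/2) * m) = (-m : ℤ) * (Real.pi * Complex.I) := by
    push_cast; ring
  rw [this, Complex.exp_int_mul, Complex.exp_pi_mul_I]
  rw [show (-m : ℤ) = -(m : ℤ) from rfl, zpow_neg]
  rw [neg_one_pow_int_eq m lam h]
  rcases Nat.even_or_odd lam with he | ho
  · rw [he.neg_one_pow]; norm_num
  · rw [ho.neg_one_pow]; norm_num

lemma parity_sphere {d lam : ℕ} (x : Fin d → ℤ) (hx : ∑ j, (x j) ^ 2 = (lam : ℤ)) :
    Even ((∑ j, x j) + lam) := by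
  rw [← hx]
  have : (∑ j, x j) + (∑ j, (x j)^2) = ∑ j, (x j + (x j)^2) := by rw [← Finset.sum_add_distrib]
  rw [this]
  apply Finset.even_sum
  intro j _
  have := Int.even_mul_succ_self (x j)
  have h2 : x j * (x j + 1) = x j + (x j)^2 := by ring
  rwa [h2] at this

lemma sum_exp_eq_sum_cos {d lam : ℕ} (S : Finset (Fin d → ℤ))
    (hS : ∀ x, x ∈ S ↔ ∑ j, (x j) ^ 2 = (lam : ℤ)) (θ : Fin d → ℝ) :
    ∑ x ∈ S, Complex.exp (2 * Real.pi * Complex.I * ∑ j, (θ j : ℂ) * (x j : ℂ))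
      = ((∑ x ∈ S, Real.cos (2 * Real.pi * ∑ j, θ j * (x j : ℝ)) : ℝ) : ℂ) := by
  classical
  set T : (Fin d → ℤ) → ℝ := fun x => 2 * Real.pi * ∑ j, θ j * (x j : ℝ) with hT
  have harg : ∀ x : Fin d → ℤ,
      2 * (Real.pi : ℂ) * Complex.I * ∑ j, (θ j : ℂ) * (x j : ℂ) = (T x : ℂ) * Complex.I := by
    intro x
    rw [hT]
    push_cast
    ring
  have hnegmem : ∀ x ∈ S, -x ∈ S := by
    intro x hx
    rw [hS] at hx ⊢
    simpa using hx
  have hre : ∑ x ∈ S, Complex.exp ((T x : ℂ) * Complex.I)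
      = ∑ x ∈ S, Complex.exp (-(T x : ℂ) * Complex.I) := by
    refine Finset.sum_nbij' (i := fun x => -x) (j := fun x => -x) hnegmem hnegmem
      (fun x _ => by simp) (fun x _ => by simp) (fun x hx => ?_)
    congr 1
    have h1 : ∑ j, θ j * (((-x) j : ℤ) : ℝ) = -∑ j, θ j * ((x j : ℤ) : ℝ) := by
      rw [← Finset.sum_neg_distrib]
      refine Finset.sum_congr rfl fun j _ => by simp [Pi.neg_apply]
    have : T (-x) = -(T x) := by simp only [hT, h1]; ring
    rw [this]; push_cast; ring
  have key : (2:ℂ) * ∑ x ∈ S, Complex.exp ((T x : ℂ) * Complex.I)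
      = (2:ℂ) * ∑ x ∈ S, ((Real.cos (T x) : ℝ) : ℂ) := by
    calc (2:ℂ) * ∑ x ∈ S, Complex.exp ((T x : ℂ) * Complex.I)
        = ∑ x ∈ S, (Complex.exp ((T x : ℂ) * Complex.I) + Complex.exp (-(T x : ℂ) * Complex.I)) := by
          rw [Finset.sum_add_distrib, ← hre]; ring
      _ = ∑ x ∈ S, (2:ℂ) * ((Real.cos (T x) : ℝ) : ℂ) := by
          refine Finset.sum_congr rfl fun x _ => ?_
          rw [Complex.exp_mul_I, Complex.exp_mul_I, Complex.ofReal_cos]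
          simp [Complex.cos_neg, Complex.sin_neg]
          ring
      _ = (2:ℂ) * ∑ x ∈ S, ((Real.cos (T x) : ℝ) : ℂ) := by rw [Finset.mul_sum]
  have := mul_left_cancel₀ (two_ne_zero (α := ℂ)) key
  rw [Finset.sum_congr rfl (fun x _ => by rw [harg x]), this]
  push_cast
  refine Finset.sum_congr rfl fun x _ => ?_
  congr 1
  rw [hT]
  push_cast
  ring

lemma abs_cos_sub_one_le (t : ℝ) : |Real.cos t - 1| ≤ t ^ 2 / 2 := by
  have hcos : Real.cos t = 1 - 2 * Real.sin (t/2) ^ 2 := by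
    have h2 : Real.cos (2 * (t/2)) = Real.cos (t/2) ^ 2 - Real.sin (t/2) ^ 2 :=
      Real.cos_two_mul' (t/2)
    rw [show 2 * (t/2) = t by ring] at h2
    nlinarith [Real.sin_sq_add_cos_sq (t/2)]
  have hs : |Real.sin (t/2)| ≤ |t/2| := Real.abs_sin_le_abs
  have hs2 : Real.sin (t/2) ^ 2 ≤ (t/2) ^ 2 := by
    rw [← _root_.sq_abs, ← _root_.sq_abs (t/2)]
    exact pow_le_pow_left₀ (abs_nonneg _) hs 2
  rw [hcos, abs_le]
  constructor <;> nlinarith [sq_nonneg (Real.sin (t/2))]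

/-- Estimate of the discrete spherical multiplier near the half-shifted origin:
`|𝔪_t(ξ) − (−1)^λ| ≤ 2π² κ(d,λ)² ‖ξ + (1/2,…,1/2)‖²` with `κ(d,λ)² = λ/d`. -/
theorem multiplier_near_half_shift (d lam : ℕ) (hd : 2 ≤ d) (hlam : 1 ≤ lam)
    (S : Finset (Fin d → ℤ)) (hS : ∀ x, x ∈ S ↔ ∑ j, (x j) ^ 2 = (lam : ℤ))
    (hne : S.Nonempty) (ξ : Fin d → ℝ) :
    ‖(S.card : ℂ)⁻¹ *
        (∑ x ∈ S, Complex.exp (2 * Real.pi * Complex.I *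
          ∑ j, ((ξ j : ℝ) : ℂ) * (x j : ℂ))) - (-1) ^ lam‖ ≤
      2 * Real.pi ^ 2 * ((lam : ℝ) / d) *
        ∑ j, |ξ j + 1 / 2 - (round (ξ j + 1 / 2) : ℝ)| ^ 2 := by
  classical
  set θ : Fin d → ℝ := fun j => ξ j + 1 / 2 - round (ξ j + 1 / 2) with hθ
  set n : Fin d → ℤ := fun j => round (ξ j + 1 / 2) with hn
  have hNpos : 0 < S.card := hne.card_pos
  have hNR : (0:ℝ) < S.card := by exact_mod_cast hNpos
  have hdR : (0:ℝ) < d := by positivity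
  -- Step 1: per-point factorization
  have hE : ∀ x ∈ S,
      Complex.exp (2 * Real.pi * Complex.I * ∑ j, ((ξ j : ℝ) : ℂ) * (x j : ℂ))
        = (-1)^lam * Complex.exp (2 * Real.pi * Complex.I * ∑ j, ((θ j : ℝ) : ℂ) * (x j : ℂ)) := by
    intro x hx
    have hpar : Even ((∑ j, x j) + lam) := parity_sphere x ((hS x).1 hx)
    have h1 : ∑ j, ((ξ j : ℝ) : ℂ) * (x j : ℂ)
        = (∑ j, ((θ j : ℝ) : ℂ) * (x j : ℂ)) + ((∑ j, n j * x j : ℤ) : ℂ)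
          + (-(1/2) * ((∑ j, x j : ℤ) : ℂ)) := by
      push_cast
      rw [← Finset.sum_add_distrib, Finset.mul_sum, ← Finset.sum_add_distrib]
      refine Finset.sum_congr rfl fun j _ => ?_
      have hre : (ξ j : ℝ) = θ j + (n j : ℝ) - 1/2 := by rw [hθ, hn]; ring
      have hco : ((ξ j : ℝ) : ℂ) = ((θ j : ℝ) : ℂ) + ((n j : ℤ) : ℂ) - 1/2 := by
        rw [show ((ξ j : ℝ) : ℂ) = ((θ j + (n j : ℝ) - 1/2 : ℝ) : ℂ) from by rw [← hre]]
        push_cast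
        ring
      rw [hco]
      ring
    have h2 : 2 * (Real.pi : ℂ) * Complex.I * ∑ j, ((ξ j : ℝ) : ℂ) * (x j : ℂ)
        = 2 * (Real.pi : ℂ) * Complex.I * ∑ j, ((θ j : ℝ) : ℂ) * (x j : ℂ)
          + ((∑ j, n j * x j : ℤ) : ℂ) * (2 * (Real.pi : ℂ) * Complex.I)
          + 2 * (Real.pi : ℂ) * Complex.I * (-(1/2) * ((∑ j, x j : ℤ) : ℂ)) := by
      rw [h1]; ring
    rw [h2, Complex.exp_add, Complex.exp_add, Complex.exp_int_mul_two_pi_mul_I,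
      exp_half_int _ lam hpar]
    ring
  -- Step 2: rewrite sum with cos
  have hsum : ∑ x ∈ S, Complex.exp (2 * Real.pi * Complex.I *
        ∑ j, ((ξ j : ℝ) : ℂ) * (x j : ℂ))
      = (-1)^lam * ((∑ x ∈ S, Real.cos (2 * Real.pi * ∑ j, θ j * (x j : ℝ)) : ℝ) : ℂ) := by
    rw [Finset.sum_congr rfl hE, ← Finset.mul_sum, sum_exp_eq_sum_cos S hS θ]
  set C : ℝ := ∑ x ∈ S, Real.cos (2 * Real.pi * ∑ j, θ j * (x j : ℝ)) with hC
  have habs : ‖(S.card : ℂ)⁻¹ *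
        (∑ x ∈ S, Complex.exp (2 * Real.pi * Complex.I *
          ∑ j, ((ξ j : ℝ) : ℂ) * (x j : ℂ))) - (-1) ^ lam‖
      = |C / S.card - 1| := by
    rw [hsum]
    have hfac : (S.card : ℂ)⁻¹ * ((-1)^lam * (C : ℂ)) - (-1)^lam
        = (-1)^lam * (((C / S.card - 1 : ℝ)) : ℂ) := by
      have hne' : (S.card : ℂ) ≠ 0 := by exact_mod_cast hNpos.ne'
      push_cast
      field_simp
    rw [hfac, norm_mul]
    have : ‖(-1:ℂ)^lam‖ = 1 := by
      rw [norm_pow]; simp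
    rw [this, one_mul, Complex.norm_real, Real.norm_eq_abs]
  rw [habs]
  -- Step 3: cosine bound
  have hQ : (d : ℝ) * ∑ x ∈ S, (∑ j, θ j * (x j : ℝ)) ^ 2
      = (S.card : ℝ) * (lam : ℝ) * ∑ j, (θ j) ^ 2 := sphere_quad S hS θ
  have hCN : |C - S.card| ≤ 2 * Real.pi ^ 2 * ∑ x ∈ S, (∑ j, θ j * (x j : ℝ)) ^ 2 := by
    have hN : (S.card : ℝ) = ∑ x ∈ S, (1:ℝ) := by simp
    rw [hC, hN, ← Finset.sum_sub_distrib]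
    calc |∑ x ∈ S, (Real.cos (2 * Real.pi * ∑ j, θ j * (x j : ℝ)) - 1)|
        ≤ ∑ x ∈ S, |Real.cos (2 * Real.pi * ∑ j, θ j * (x j : ℝ)) - 1| :=
          Finset.abs_sum_le_sum_abs _ _
      _ ≤ ∑ x ∈ S, (2 * Real.pi * ∑ j, θ j * (x j : ℝ)) ^ 2 / 2 :=
          Finset.sum_le_sum fun x _ => abs_cos_sub_one_le _
      _ = 2 * Real.pi ^ 2 * ∑ x ∈ S, (∑ j, θ j * (x j : ℝ)) ^ 2 := by
          rw [Finset.mul_sum]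
          exact Finset.sum_congr rfl fun x _ => by ring
  have hW : ∑ j, |ξ j + 1 / 2 - (round (ξ j + 1 / 2) : ℝ)| ^ 2 = ∑ j, (θ j) ^ 2 := by
    refine Finset.sum_congr rfl fun j _ => ?_
    rw [_root_.sq_abs, hθ]
  rw [hW]
  have hdiv : |C / S.card - 1| = |C - S.card| / S.card := by
    rw [show C / S.card - 1 = (C - S.card) / S.card from by field_simp, abs_div,
      abs_of_pos hNR]
  rw [hdiv, div_le_iff₀ hNR]
  have hQval : ∑ x ∈ S, (∑ j, θ j * (x j : ℝ)) ^ 2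
      = (S.card : ℝ) * (lam : ℝ) * (∑ j, (θ j) ^ 2) / d := by
    field_simp
    linarith [hQ]
  calc |C - S.card| ≤ 2 * Real.pi ^ 2 * ∑ x ∈ S, (∑ j, θ j * (x j : ℝ)) ^ 2 := hCN
    _ = 2 * Real.pi ^ 2 * ((lam : ℝ) / d) * (∑ j, (θ j) ^ 2) * S.card := by
        rw [hQval]; field_simp
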